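/- Let E, F be valued vector spaces over a valued field K, with reduced valuations. Then the kernel of the tensor product valuation u_E ⊗ u_F on E ⊗_K F is zero; more generally, for arbitrary valuations, ker(u_E ⊗ u_F) is the image of (ker u_E) ⊗_K F + E ⊗_K (ker u_F) — equivalently (as stated) it equals the kernel generated by the two kernels. -/

import Mathlib

open scoped TensorProduct

/-- The tensor product valuation on `E ⊗[K] F` (supremum over presentations). -/
noncomputable def tensVal {K E F : Type*} [Field K]
    [AddCommGroup E] [Module K E] [AddCommGroup F] [Module K F]
    (uE : E → EReal) (uF : F → EReal) (z : E ⊗[K] F) : EReal :=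
  sSup { r : EReal | ∃ P : List (E × F),
    (P.map fun p => p.1 ⊗ₜ[K] p.2).sum = z ∧
    r = (P.map fun p => uE p.1 + uF p.2).foldr min ⊤ }

namespace TVK

lemma ereal_isreal {x : EReal} (hb : x ≠ ⊥) (ht : x ≠ ⊤) : ∃ r : ℝ, x = r := by
  induction x with
  | bot => exact absurd rfl hb
  | coe r => exact ⟨r, rfl⟩
  | top => exact absurd rfl ht

lemma ereal_top_of_forall {x : EReal} (h : ∀ r : ℝ, (r : EReal) ≤ x) : x = ⊤ := by
  by_contra hx
  obtain ⟨r, hr1, -⟩ := EReal.exists_between_coe_real (lt_top_iff_ne_top.2 hx)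
  exact absurd (h r) (not_le.2 hr1)

lemma ereal_cancel {c : ℝ} {a b : EReal} (h : a + (c : EReal) ≤ b + (c : EReal)) : a ≤ b :=
  (EReal.addLECancellable_coe c).add_le_add_iff_right.1 h

lemma ereal_min_add (c : ℝ) (a b : EReal) :
    min a b + (c : EReal) = min (a + c) (b + c) :=
  Monotone.map_min (f := (· + (c : EReal))) (fun x y h => add_le_add_left h (c : EReal))

section V

variable {K : Type*} [Field K] (v : K → EReal)
variable (hvbot : ∀ a, v a ≠ ⊥) (hvmul : ∀ a b, v (a * b) = v a + v b)
  (hker : ∀ a : K, v a = ⊤ → a = 0)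

include hvbot hvmul hker

lemma v_one : v 1 = 0 := by
  have h : v 1 = v 1 + v 1 := by rw [← hvmul, mul_one]
  obtain ⟨r, hr⟩ := ereal_isreal (hvbot 1) (fun ht => one_ne_zero (hker 1 ht))
  rw [hr, ← EReal.coe_add] at h
  rw [hr]
  norm_cast at h ⊢
  linarith

lemma v_neg_one : v (-1 : K) = 0 := by
  have h : v (-1 : K) + v (-1 : K) = 0 := by
    rw [← hvmul, neg_one_mul, neg_neg, v_one v hvbot hvmul hker]
  obtain ⟨r, hr⟩ := ereal_isreal (hvbot (-1))
    (fun ht => one_ne_zero (neg_eq_zero.1 (hker (-1) ht)))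
  rw [hr, ← EReal.coe_add] at h
  rw [hr]
  norm_cast at h ⊢
  linarith

lemma v_neg (a : K) : v (-a) = v a := by
  rw [← neg_one_mul, hvmul, v_neg_one v hvbot hvmul hker, zero_add]

lemma v_inv_add {a : K} (ha : a ≠ 0) : v a⁻¹ + v a = 0 := by
  rw [← hvmul, inv_mul_cancel₀ ha, v_one v hvbot hvmul hker]

end V

section U

variable {K E : Type*} [Field K] [AddCommGroup E] [Module K E]
variable (v : K → EReal) (uE : E → EReal)
variable (hv0 : v 0 = ⊤) (hvbot : ∀ a, v a ≠ ⊥) (hvmul : ∀ a b, v (a * b) = v a + v b)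
  (hker : ∀ a : K, v a = ⊤ → a = 0)
variable (uEbot : ∀ x, uE x ≠ ⊥) (uEsmul : ∀ (a : K) (x : E), uE (a • x) = v a + uE x)
  (uEadd : ∀ x y, min (uE x) (uE y) ≤ uE (x + y))

include hv0 uEbot uEsmul in
lemma u_zero : uE 0 = ⊤ := by
  have h := uEsmul 0 0
  rw [zero_smul, hv0, EReal.top_add_of_ne_bot (uEbot 0)] at h
  exact h

include hvbot hvmul hker uEsmul in
lemma u_neg (x : E) : uE (-x) = uE x := by
  have h := uEsmul (-1) x
  rw [neg_one_smul, v_neg_one v hvbot hvmul hker, zero_add] at h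
  exact h

include hvbot hvmul hker uEsmul uEadd in
lemma u_sub (x y : E) : min (uE x) (uE y) ≤ uE (x - y) := by
  rw [sub_eq_add_neg]
  have := uEadd x (-y)
  rwa [u_neg v uE hvbot hvmul hker uEsmul] at this

include hv0 uEbot uEsmul uEadd in
lemma summin {ι : Type*} (t : Finset ι) (y : ι → E) (r : EReal)
    (h : ∀ j ∈ t, r ≤ uE (y j)) : r ≤ uE (∑ j ∈ t, y j) := by
  classical
  induction t using Finset.induction_on with
  | empty => simp [u_zero v uE hv0 uEbot uEsmul]
  | insert a t' hni ih =>
    rw [Finset.sum_insert hni]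
    refine le_trans (le_min (h a (Finset.mem_insert_self a t'))
      (ih fun j hj => h j (Finset.mem_insert_of_mem hj))) (uEadd _ _)

include hv0 uEbot uEsmul uEadd in
lemma listmin (l : List E) : (l.map uE).foldr min ⊤ ≤ uE l.sum := by
  induction l with
  | nil => simp [u_zero v uE hv0 uEbot uEsmul]
  | cons a l ih =>
    simp only [List.map_cons, List.foldr_cons, List.sum_cons]
    exact le_trans (min_le_min_left _ ih) (uEadd _ _)

include hvbot hvmul hker uEbot uEsmul uEadd in
lemma u_kerinv (x n : E) (hn : uE n = ⊤) : uE (x - n) = uE x := by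
  have h1 : uE (x - n) ≤ uE x := by
    have h := uEadd (x - n) n
    rw [sub_add_cancel, hn, min_eq_left le_top] at h
    exact h
  have h2 : uE x ≤ uE (x - n) := by
    have h := u_sub v uE hvbot hvmul hker uEsmul uEadd x n
    rw [hn, min_eq_left le_top] at h
    exact h
  exact le_antisymm h1 h2


end U

lemma foldle {α : Type*} (l : List α) (f g : α → EReal) (c : ℝ)
    (h : ∀ x ∈ l, f x ≤ g x + (c : EReal)) :
    (l.map f).foldr min ⊤ ≤ (l.map g).foldr min ⊤ + (c : EReal) := by
  induction l with
  | nil => simp [EReal.top_add_coe]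
  | cons a l ih =>
    simp only [List.map_cons, List.foldr_cons]
    rw [ereal_min_add]
    exact min_le_min (h a (List.mem_cons_self))
      (ih fun x hx => h x (List.mem_cons_of_mem a hx))

lemma foldadd (c : ℝ) (l : List EReal) :
    (l.map (fun x => (c : EReal) + x)).foldr min ⊤ = (c : EReal) + l.foldr min ⊤ := by
  induction l with
  | nil => simp [EReal.coe_add_top]
  | cons a l ih =>
    simp only [List.map_cons, List.foldr_cons, ih]
    have : Monotone (fun x : EReal => (c : EReal) + x) :=
      fun x y h => add_le_add_right h _
    exact (this.map_min).symm

lemma foldbase (l : List EReal) (c : EReal) : l.foldr min c = min (l.foldr min ⊤) c := by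
  induction l with
  | nil => simp
  | cons a l ih => simp only [List.foldr_cons, ih, min_assoc]

lemma maxn {ι : Type*} (t : Finset ι) (P : ι → ℕ → Prop)
    (h : ∀ j ∈ t, ∃ N, ∀ k ≥ N, P j k) : ∃ N, ∀ k ≥ N, ∀ j ∈ t, P j k := by
  classical
  induction t using Finset.induction_on with
  | empty => exact ⟨0, by simp⟩
  | insert a t' hni ih =>
    obtain ⟨N₁, hN₁⟩ := h a (Finset.mem_insert_self a t')
    obtain ⟨N₂, hN₂⟩ := ih fun j hj => h j (Finset.mem_insert_of_mem hj)
    refine ⟨max N₁ N₂, fun k hk j hj => ?_⟩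
    rcases Finset.mem_insert.1 hj with rfl | hj
    · exact hN₁ k (le_trans (le_max_left _ _) hk)
    · exact hN₂ k (le_trans (le_max_right _ _) hk) j hj

lemma finlb {ι : Type*} (t : Finset ι) (f : ι → EReal) (h : ∀ j ∈ t, f j ≠ ⊥) :
    ∃ m : ℝ, ∀ j ∈ t, (m : EReal) ≤ f j := by
  classical
  induction t using Finset.induction_on with
  | empty => exact ⟨0, by simp⟩
  | insert a t' hni ih =>
    obtain ⟨m, hm⟩ := ih fun j hj => h j (Finset.mem_insert_of_mem hj)
    have ha := h a (Finset.mem_insert_self a t')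
    by_cases hat : f a = ⊤
    · refine ⟨m, fun j hj => ?_⟩
      rcases Finset.mem_insert.1 hj with rfl | hj
      · rw [hat]; exact le_top
      · exact hm j hj
    · obtain ⟨r, hr⟩ := ereal_isreal ha hat
      refine ⟨min m r, fun j hj => ?_⟩
      rcases Finset.mem_insert.1 hj with rfl | hj
      · rw [hr]; exact_mod_cast min_le_right m r
      · exact le_trans (by exact_mod_cast min_le_left m r) (hm j hj)

lemma DUAL {K M : Type*} [Field K] [AddCommGroup M] [Module K M] {m : M} (hm : m ≠ 0) :
    ∃ f : M →ₗ[K] K, f m = 1 := by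
  have hli : LinearIndepOn K id ({m} : Set M) := LinearIndepOn.singleton hm
  let b := Module.Basis.extend hli
  have hmem : m ∈ hli.extend (Set.subset_univ _) := hli.subset_extend _ rfl
  refine ⟨b.coord ⟨m, hmem⟩, ?_⟩
  have hb : b ⟨m, hmem⟩ = m := Module.Basis.extend_apply_self hli ⟨m, hmem⟩
  have hc : b.coord ⟨m, hmem⟩ (b ⟨m, hmem⟩) = 1 := by
    rw [Module.Basis.coord_apply, Module.Basis.repr_self, Finsupp.single_eq_same]
  rw [hb] at hc
  exact hc


section FDL

variable {K E : Type*} [Field K] [AddCommGroup E] [Module K E]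
variable (v : K → EReal) (uE : E → EReal)
variable (hv0 : v 0 = ⊤) (hvbot : ∀ a, v a ≠ ⊥) (hvmul : ∀ a b, v (a * b) = v a + v b)
  (hker : ∀ a : K, v a = ⊤ → a = 0)
  (hcomplete : ∀ f : ℕ → K,
      (∀ r : ℝ, ∃ N, ∀ p ≥ N, ∀ q ≥ N, (r : EReal) ≤ v (f p - f q)) →
      ∃ a : K, ∀ r : ℝ, ∃ N, ∀ p ≥ N, (r : EReal) ≤ v (f p - a))
variable (uEbot : ∀ x, uE x ≠ ⊥) (uEsmul : ∀ (a : K) (x : E), uE (a • x) = v a + uE x)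
  (uEadd : ∀ x y, min (uE x) (uE y) ≤ uE (x + y))
  (uEred : ∀ x, uE x = ⊤ → x = 0)

include hv0 hvbot hvmul hker hcomplete uEbot uEsmul uEadd uEred in
lemma FDL {ι : Type*} : ∀ (n : ℕ) (s : Finset ι), s.card = n →
    ∀ (x : ι → E), (LinearIndependent K fun j : s => x ↑j) →
    ∀ i ∈ s, ∃ C : ℝ, ∀ a : ι → K,
      uE (∑ j ∈ s, a j • x j) ≤ v (a i) + (C : EReal) := by
  classical
  intro n
  induction n with
  | zero =>
    intro s hs x _ i hi
    rw [Finset.card_eq_zero.1 hs] at hi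
    exact absurd hi (Finset.notMem_empty i)
  | succ n IH =>
    intro s hs x hx i hi
    by_contra hcon
    push_neg at hcon
    have hcon' : ∀ k : ℕ, ∃ a : ι → K,
        v (a i) + ((k : ℝ) : EReal) < uE (∑ j ∈ s, a j • x j) :=
      fun k => hcon (k : ℝ)
    choose aa haa using hcon'
    have hne : ∀ k, aa k i ≠ 0 := by
      intro k hk
      have h := haa k
      rw [hk, hv0, EReal.top_add_coe] at h
      exact absurd h.le (not_le.2 (lt_top_iff_ne_top.2 (fun ht => by
        rw [ht] at h; exact lt_irrefl _ h)))
    set b : ℕ → ι → K := fun k j => (aa k i)⁻¹ * aa k j with hbdef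
    have hb1 : ∀ k, b k i = 1 := fun k => inv_mul_cancel₀ (hne k)
    set W : ℕ → E := fun k => ∑ j ∈ s, b k j • x j with hWdef
    have hWval : ∀ k, uE (W k) = v ((aa k i)⁻¹) + uE (∑ j ∈ s, aa k j • x j) := by
      intro k
      rw [← uEsmul]
      congr 1
      rw [Finset.smul_sum]
      exact Finset.sum_congr rfl fun j _ => (smul_smul _ _ _).symm
    have hW : ∀ k : ℕ, ((k : ℝ) : EReal) < uE (W k) := by
      intro k
      obtain ⟨r, hr⟩ := ereal_isreal (hvbot (aa k i)) (fun ht => hne k (hker _ ht))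
      obtain ⟨r', hr'⟩ := ereal_isreal (hvbot ((aa k i)⁻¹))
        (fun ht => inv_ne_zero (hne k) (hker _ ht))
      have hsum0 : r' + r = 0 := by
        have := v_inv_add v hvbot hvmul hker (hne k)
        rw [hr, hr', ← EReal.coe_add] at this
        exact_mod_cast this
      have h2 : (r' : EReal) + (v (aa k i) + (k : ℝ)) <
          (r' : EReal) + uE (∑ j ∈ s, aa k j • x j) :=
        EReal.add_lt_add_left_coe (haa k) r'
      rw [hWval k, hr']
      refine lt_of_le_of_lt (le_of_eq ?_) h2
      rw [hr, ← add_assoc, ← EReal.coe_add, hsum0]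
      simp
    have hx' : LinearIndependent K fun j : (s.erase i) => x ↑j := by
      let e : {j // j ∈ s.erase i} → {j // j ∈ s} :=
        fun j => ⟨(j : ι), Finset.mem_of_mem_erase j.2⟩
      have he : Function.Injective e := by
        intro j j' h
        have h2 : (e j).1 = (e j').1 := by rw [h]
        exact Subtype.ext h2
      exact hx.comp e he
    have hCj : ∀ j ∈ s.erase i, ∃ C : ℝ, ∀ c : ι → K,
        uE (∑ l ∈ s.erase i, c l • x l) ≤ v (c j) + (C : EReal) :=
      fun j hj => IH (s.erase i)
        (by rw [Finset.card_erase_of_mem hi, hs]; rfl) x hx' j hj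
    choose C hC using hCj
    have hWdiff : ∀ p q : ℕ, W p - W q = ∑ l ∈ s.erase i, (b p l - b q l) • x l := by
      intro p q
      rw [Finset.sum_erase _ (by rw [hb1, hb1, sub_self, zero_smul])]
      rw [hWdef]
      simp only [← Finset.sum_sub_distrib, sub_smul]
    have hWcau : ∀ p q : ℕ, min ((p : ℝ) : EReal) ((q : ℝ) : EReal) ≤ uE (W p - W q) := by
      intro p q
      exact le_trans (min_le_min (hW p).le (hW q).le)
        (u_sub v uE hvbot hvmul hker uEsmul uEadd _ _)
    have hcau : ∀ j ∈ s.erase i, ∀ r : ℝ, ∃ N : ℕ, ∀ p ≥ N, ∀ q ≥ N,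
        (r : EReal) ≤ v (b p j - b q j) := by
      intro j hj r
      refine ⟨⌈r + C j hj⌉₊, fun p hp q hq => ?_⟩
      have hpr : r + C j hj ≤ (p : ℝ) := le_trans (Nat.le_ceil _) (Nat.cast_le.2 hp)
      have hqr : r + C j hj ≤ (q : ℝ) := le_trans (Nat.le_ceil _) (Nat.cast_le.2 hq)
      have h1 : ((r + C j hj : ℝ) : EReal) ≤ uE (W p - W q) :=
        le_trans (le_min (EReal.coe_le_coe_iff.2 hpr) (EReal.coe_le_coe_iff.2 hqr))
          (hWcau p q)
      have h2 := hC j hj (fun l => b p l - b q l)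
      rw [← hWdiff p q] at h2
      have h3 : (r : EReal) + (C j hj : EReal) ≤ v (b p j - b q j) + (C j hj : EReal) := by
        rw [← EReal.coe_add]
        exact le_trans h1 h2
      exact ereal_cancel h3
    have hlim : ∀ j ∈ s.erase i, ∃ a : K, ∀ r : ℝ, ∃ N, ∀ p ≥ N,
        (r : EReal) ≤ v (b p j - a) :=
      fun j hj => hcomplete (fun k => b k j) (hcau j hj)
    choose A hA using hlim
    set al : ι → K := fun j => if h : j ∈ s.erase i then A j h else 0 with haldef
    set w : E := x i + ∑ j ∈ s.erase i, al j • x j with hwdef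
    have hw0 : w ≠ 0 := by
      intro hw
      set cc : ι → K := fun j => if j = i then (1 : K) else al j with hccdef
      have hsum : ∑ j ∈ s, cc j • x j = 0 := by
        rw [← Finset.add_sum_erase s _ hi]
        have h1 : cc i = 1 := if_pos rfl
        have h2 : ∑ j ∈ s.erase i, cc j • x j = ∑ j ∈ s.erase i, al j • x j :=
          Finset.sum_congr rfl fun j hj => by
            rw [hccdef]; simp only [if_neg (Finset.ne_of_mem_erase hj)]
        rw [h1, h2, one_smul, ← hwdef, hw]
      have h0 : ∑ j : s, cc ↑j • x ↑j = 0 := by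
        rw [Finset.sum_coe_sort s (fun j => cc j • x j)]
        exact hsum
      have := Fintype.linearIndependent_iff.1 hx (fun j => cc ↑j) h0 ⟨i, hi⟩
      rw [hccdef] at this
      simp only [if_pos rfl] at this
      exact one_ne_zero this
    obtain ⟨m, hm⟩ := finlb s (fun j => uE (x j)) (fun j _ => uEbot (x j))
    have htopw : uE w = ⊤ := by
      apply ereal_top_of_forall
      intro r
      have hNj : ∀ j ∈ s.erase i, ∃ N, ∀ k ≥ N,
          ((r - m : ℝ) : EReal) ≤ v (b k j - al j) := by
        intro j hj
        obtain ⟨N, hN⟩ := hA j hj (r - m)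
        refine ⟨N, fun k hk => ?_⟩
        rw [haldef]
        simp only [dif_pos hj]
        exact hN k hk
      obtain ⟨N, hN⟩ := maxn (s.erase i) _ hNj
      set k := max N ⌈r⌉₊ with hkdef
      have h1 : (r : EReal) ≤ uE (W k) := by
        refine le_trans ?_ (hW k).le
        exact_mod_cast le_trans (Nat.le_ceil r)
          (Nat.cast_le.2 (le_max_right N ⌈r⌉₊))
      have hWk : W k = x i + ∑ j ∈ s.erase i, b k j • x j := by
        rw [show W k = ∑ j ∈ s, b k j • x j from rfl,
          ← Finset.add_sum_erase s _ hi, hb1, one_smul]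
      have hdiffrep : w - W k = ∑ j ∈ s.erase i, (al j - b k j) • x j := by
        rw [hwdef, hWk, add_sub_add_left_eq_sub]
        simp only [← Finset.sum_sub_distrib, sub_smul]
      have h2 : (r : EReal) ≤ uE (w - W k) := by
        rw [hdiffrep]
        refine summin v uE hv0 uEbot uEsmul uEadd _ _ _ (fun j hj => ?_)
        rw [uEsmul]
        have hv1 : ((r - m : ℝ) : EReal) ≤ v (al j - b k j) := by
          rw [← v_neg v hvbot hvmul hker, neg_sub]
          exact hN k (le_max_left _ _) j hj
        have hv2 : (m : EReal) ≤ uE (x j) := hm j (Finset.mem_of_mem_erase hj)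
        calc (r : EReal) = ((r - m : ℝ) : EReal) + (m : EReal) := by
              rw [← EReal.coe_add]; norm_num
          _ ≤ v (al j - b k j) + uE (x j) := add_le_add hv1 hv2
      calc (r : EReal) ≤ min (uE (W k)) (uE (w - W k)) := le_min h1 h2
        _ ≤ uE (W k + (w - W k)) := uEadd _ _
        _ = uE w := by rw [add_sub_cancel]
    exact hw0 (uEred w htopw)

include hv0 hvbot hvmul hker hcomplete uEbot uEsmul uEadd uEred in
lemma CLOSED (V : Submodule K E) [FiniteDimensional K V] (u : E) (hu : u ∉ V) :
    ∃ D : ℝ, ∀ w ∈ V, uE (u - w) ≤ (D : EReal) := by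
  classical
  by_contra hcon
  push_neg at hcon
  have hcon' : ∀ k : ℕ, ∃ w ∈ V, ((k : ℝ) : EReal) < uE (u - w) := fun k => hcon (k : ℝ)
  choose W hWV hW using hcon'
  set n := Module.finrank K V with hn
  set bV : Module.Basis (Fin n) K V := Module.finBasis K V with hbV
  set x : Fin n → E := fun j => ((bV j : V) : E) with hx
  have hxli : LinearIndependent K x :=
    bV.linearIndependent.map' V.subtype (Submodule.ker_subtype V)
  have hxli' : LinearIndependent K fun j : (Finset.univ : Finset (Fin n)) => x ↑j := by
    have hi : Function.Injective
        (fun j : (Finset.univ : Finset (Fin n)) => (j : Fin n)) := by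
      intro a b h
      exact Subtype.ext h
    exact hxli.comp _ hi
  have hFDL : ∀ j : Fin n, ∃ C : ℝ, ∀ a : Fin n → K,
      uE (∑ l ∈ Finset.univ, a l • x l) ≤ v (a j) + (C : EReal) :=
    fun j => FDL v uE hv0 hvbot hvmul hker hcomplete uEbot uEsmul uEadd uEred
      (Finset.univ.card) Finset.univ rfl x hxli' j (Finset.mem_univ j)
  choose C hC using hFDL
  set c : ℕ → Fin n → K := fun k => fun j => bV.repr ⟨W k, hWV k⟩ j with hc
  have hWsum : ∀ k, W k = ∑ l, c k l • x l := by
    intro k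
    have h1 : (⟨W k, hWV k⟩ : V) = ∑ l, c k l • bV l := (bV.sum_repr _).symm
    have h2 := congrArg (Subtype.val : V → E) h1
    simpa [x] using h2
  have hWd : ∀ p q : ℕ, W p - W q = ∑ l, (c p l - c q l) • x l := by
    intro p q
    rw [hWsum p, hWsum q, ← Finset.sum_sub_distrib]
    exact Finset.sum_congr rfl fun l _ => by rw [sub_smul]
  have hWcau : ∀ p q : ℕ, min ((p : ℝ) : EReal) ((q : ℝ) : EReal) ≤ uE (W p - W q) := by
    intro p q
    have h1 : W p - W q = (u - W q) - (u - W p) := by abel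
    rw [h1]
    refine le_trans ?_ (u_sub v uE hvbot hvmul hker uEsmul uEadd _ _)
    rw [min_comm]
    exact min_le_min (hW q).le (hW p).le
  have hcau : ∀ j : Fin n, ∀ r : ℝ, ∃ N : ℕ, ∀ p ≥ N, ∀ q ≥ N,
      (r : EReal) ≤ v (c p j - c q j) := by
    intro j r
    refine ⟨⌈r + C j⌉₊, fun p hp q hq => ?_⟩
    have hpr : r + C j ≤ (p : ℝ) := le_trans (Nat.le_ceil _) (Nat.cast_le.2 hp)
    have hqr : r + C j ≤ (q : ℝ) := le_trans (Nat.le_ceil _) (Nat.cast_le.2 hq)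
    have h1 : ((r + C j : ℝ) : EReal) ≤ uE (W p - W q) :=
      le_trans (le_min (EReal.coe_le_coe_iff.2 hpr) (EReal.coe_le_coe_iff.2 hqr)) (hWcau p q)
    have h2 := hC j (fun l => c p l - c q l)
    rw [← hWd p q] at h2
    have h3 : (r : EReal) + (C j : EReal) ≤ v (c p j - c q j) + (C j : EReal) := by
      rw [← EReal.coe_add]
      exact le_trans h1 h2
    exact ereal_cancel h3
  choose A hA using fun j => hcomplete (fun k => c k j) (hcau j)
  set winf : E := ∑ l, A l • x l with hwinf
  have hwinfV : winf ∈ V := Submodule.sum_mem V fun l _ =>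
    Submodule.smul_mem V _ (by rw [hx]; exact (bV l).2)
  obtain ⟨m, hm⟩ := finlb Finset.univ (fun j : Fin n => uE (x j)) (fun j _ => uEbot (x j))
  have htop : uE (u - winf) = ⊤ := by
    apply ereal_top_of_forall
    intro r
    have hNj : ∀ j ∈ (Finset.univ : Finset (Fin n)), ∃ N, ∀ k ≥ N,
        ((r - m : ℝ) : EReal) ≤ v (c k j - A j) := fun j _ => hA j (r - m)
    obtain ⟨N, hN⟩ := maxn Finset.univ _ hNj
    set k := max N ⌈r⌉₊ with hk
    have h1 : (r : EReal) ≤ uE (u - W k) := by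
      refine le_trans ?_ (hW k).le
      exact_mod_cast le_trans (Nat.le_ceil r) (Nat.cast_le.2 (le_max_right N ⌈r⌉₊))
    have h2 : (r : EReal) ≤ uE (W k - winf) := by
      have hrep : W k - winf = ∑ l, (c k l - A l) • x l := by
        rw [hWsum k, hwinf, ← Finset.sum_sub_distrib]
        exact Finset.sum_congr rfl fun l _ => by rw [sub_smul]
      rw [hrep]
      refine summin v uE hv0 uEbot uEsmul uEadd _ _ _ (fun j hj => ?_)
      rw [uEsmul]
      calc (r : EReal) = ((r - m : ℝ) : EReal) + (m : EReal) := by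
            rw [← EReal.coe_add]; norm_num
        _ ≤ v (c k j - A j) + uE (x j) :=
            add_le_add (hN k (le_max_left _ _) j hj) (hm j hj)
    calc (r : EReal) ≤ min (uE (u - W k)) (uE (W k - winf)) := le_min h1 h2
      _ ≤ uE ((u - W k) + (W k - winf)) := uEadd _ _
      _ = uE (u - winf) := by rw [sub_add_sub_cancel]
  have := uEred _ htop
  have huw : u = winf := by
    have := sub_eq_zero.1 this
    exact this
  exact hu (huw ▸ hwinfV)

include hv0 hvbot hvmul hker hcomplete uEbot uEsmul uEadd uEred in
lemma PROJ : ∀ (k : ℕ) (U V : Submodule K E), FiniteDimensional K U → V ≤ U →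
    Module.finrank K U ≤ Module.finrank K V + k → ∀ ε : ℝ, 0 < ε →
    ∃ π : E →ₗ[K] E, (∀ w ∈ V, π w = w) ∧ (∀ x, π x ∈ V) ∧
      ∀ x ∈ U, uE x ≤ uE (π x) + (ε : EReal) := by
  intro k
  induction k with
  | zero =>
    intro U V hfd hVU hrank ε hε
    haveI := hfd
    have hUV : V = U := Submodule.eq_of_le_of_finrank_le hVU (by simpa using hrank)
    obtain ⟨V', hV'⟩ := Submodule.exists_isCompl V
    refine ⟨V.subtype ∘ₗ V.projectionOnto V' hV', ?_, ?_, ?_⟩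
    · intro w hw
      have := Submodule.projectionOnto_apply_left hV' ⟨w, hw⟩
      simp only [LinearMap.comp_apply, Submodule.coe_subtype]
      rw [this]
    · intro x
      exact Submodule.coe_mem _
    · intro x hx
      have hxV : x ∈ V := hUV ▸ hx
      have heq : (V.subtype ∘ₗ V.projectionOnto V' hV') x = x := by
        have := Submodule.projectionOnto_apply_left hV' ⟨x, hxV⟩
        simp only [LinearMap.comp_apply, Submodule.coe_subtype]
        rw [this]
      rw [heq]
      exact le_add_of_nonneg_right (by exact_mod_cast hε.le)
  | succ k IH =>
    intro U V hfd hVU hrank ε hε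
    haveI := hfd
    haveI : FiniteDimensional K V := Submodule.finiteDimensional_of_le hVU
    by_cases hr : Module.finrank K U ≤ Module.finrank K V + k
    · exact IH U V hfd hVU hr ε hε
    · push_neg at hr
      have hne : V ≠ U := by
        intro h
        rw [h] at hr
        omega
      obtain ⟨u, huU, huV⟩ := SetLike.exists_of_lt (lt_of_le_of_ne hVU hne)
      obtain ⟨D, hD⟩ := CLOSED v uE hv0 hvbot hvmul hker hcomplete uEbot uEsmul uEadd
        uEred V u huV
      set S : Set EReal := {e | ∃ w ∈ V, e = uE (u - w)} with hS
      set d : EReal := sSup S with hd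
      have hdD : d ≤ (D : EReal) := sSup_le (by rintro e ⟨w, hw, rfl⟩; exact hD w hw)
      have hud : uE u ≤ d := le_sSup ⟨0, V.zero_mem, by rw [sub_zero]⟩
      have hdbot : d ≠ ⊥ := fun h => uEbot u (le_bot_iff.1 (h ▸ hud))
      have hdtop : d ≠ ⊤ := fun h => by
        rw [h] at hdD
        exact absurd (top_le_iff.1 hdD) (EReal.coe_ne_top D)
      obtain ⟨dr, hdr⟩ := ereal_isreal hdbot hdtop
      have hlt : ((dr - ε / 2 : ℝ) : EReal) < d := by
        rw [hdr]
        exact_mod_cast by linarith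
      obtain ⟨e, ⟨w₀, hw₀V, rfl⟩, he⟩ := lt_sSup_iff.1 hlt
      set u' : E := u - w₀ with hu'
      have hu'V : u' ∉ V := fun h => huV (by
        have : u = u' + w₀ := by rw [hu']; abel
        rw [this]; exact V.add_mem h hw₀V)
      have hu'U : u' ∈ U := Submodule.sub_mem U huU (hVU hw₀V)
      have hdle : d ≤ uE u' + ((ε / 2 : ℝ) : EReal) := by
        rw [hdr]
        calc (dr : EReal) = ((dr - ε / 2 : ℝ) : EReal) + ((ε / 2 : ℝ) : EReal) := by
              rw [← EReal.coe_add]; norm_num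
          _ ≤ uE (u - w₀) + ((ε / 2 : ℝ) : EReal) := add_le_add_left he.le _
      -- key bound
      have key : ∀ w ∈ V, ∀ a : K, uE (w + a • u') ≤ uE w + ((ε / 2 : ℝ) : EReal) := by
        intro w hw a
        by_cases ha : a = 0
        · rw [ha, zero_smul, add_zero]
          exact le_add_of_nonneg_right (by exact_mod_cast (half_pos hε).le)
        · have hmain : uE (w + a • u') ≤ uE (a • u') + ((ε / 2 : ℝ) : EReal) := by
            have h1 : uE (w + a • u') = v a + uE (a⁻¹ • w + u') := by
              rw [← uEsmul]
              congr 1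
              rw [smul_add, smul_inv_smul₀ ha]
            have h2 : uE (a⁻¹ • w + u') ≤ d :=
              le_sSup ⟨w₀ - a⁻¹ • w, Submodule.sub_mem V hw₀V (V.smul_mem _ hw), by
                rw [hu']; abel_nf⟩
            calc uE (w + a • u') = v a + uE (a⁻¹ • w + u') := h1
              _ ≤ v a + (uE u' + ((ε / 2 : ℝ) : EReal)) :=
                  add_le_add_right (le_trans h2 hdle) _
              _ = (v a + uE u') + ((ε / 2 : ℝ) : EReal) := by rw [add_assoc]
              _ = uE (a • u') + ((ε / 2 : ℝ) : EReal) := by rw [uEsmul]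
          rcases le_or_gt (uE (a • u')) (uE w) with hcase | hcase
          · exact le_trans hmain (add_le_add_left hcase _)
          · have h4 : min (uE (w + a • u')) (uE (a • u')) ≤ uE w := by
              calc min (uE (w + a • u')) (uE (a • u'))
                  ≤ uE ((w + a • u') - a • u') :=
                    u_sub v uE hvbot hvmul hker uEsmul uEadd _ _
                _ = uE w := by rw [add_sub_cancel_right]
            have h5 : uE (w + a • u') ≤ uE w := by
              by_contra hlt5
              push_neg at hlt5
              exact absurd h4 (not_le.2 (lt_min hlt5 hcase))
            exact le_trans h5 (le_add_of_nonneg_right (by exact_mod_cast (half_pos hε).le))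
      -- functional lam
      have hqne : Submodule.Quotient.mk (p := V) u' ≠ 0 :=
        fun h => hu'V ((Submodule.Quotient.mk_eq_zero V).1 h)
      obtain ⟨f₀, hf₀⟩ := DUAL (K := K) hqne
      set lam : E →ₗ[K] K := f₀ ∘ₗ V.mkQ with hlam
      have hlamV : ∀ w ∈ V, lam w = 0 := by
        intro w hw
        rw [hlam]
        simp only [LinearMap.comp_apply, Submodule.mkQ_apply]
        rw [(Submodule.Quotient.mk_eq_zero V).2 hw, map_zero]
      have hlamu' : lam u' = 1 := hf₀
      set p : E →ₗ[K] E := LinearMap.id - lam.smulRight u' with hp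
      have hpapp : ∀ y : E, p y = y - lam y • u' := fun y => rfl
      set V' : Submodule K E := V ⊔ Submodule.span K {u'} with hV'
      have hu'V' : u' ∈ V' := Submodule.mem_sup_right (Submodule.mem_span_singleton_self u')
      have hVV' : V ≤ V' := le_sup_left
      have hV'U : V' ≤ U := sup_le hVU ((Submodule.span_singleton_le_iff_mem u' U).2 hu'U)
      haveI : FiniteDimensional K V' := Submodule.finiteDimensional_of_le hV'U
      have hrank' : Module.finrank K U ≤ Module.finrank K V' + k := by
        have hlt' : V < V' := lt_of_le_of_ne hVV' (fun h => hu'V (h ▸ hu'V'))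
        have := Submodule.finrank_lt_finrank_of_lt hlt'
        omega
      obtain ⟨π₁, hπ₁id, hπ₁mem, hπ₁bd⟩ := IH U V' hfd hV'U hrank' (ε / 2) (half_pos hε)
      have hdecomp : ∀ y ∈ V', ∃ w ∈ V, ∃ a : K, y = w + a • u' := by
        intro y hy
        rw [hV'] at hy
        obtain ⟨w, hw, z, hz, rfl⟩ := Submodule.mem_sup.1 hy
        obtain ⟨a, rfl⟩ := Submodule.mem_span_singleton.1 hz
        exact ⟨w, hw, a, rfl⟩
      have hpV' : ∀ y ∈ V', p y ∈ V ∧ uE y ≤ uE (p y) + ((ε / 2 : ℝ) : EReal) := by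
        intro y hy
        obtain ⟨w, hw, a, rfl⟩ := hdecomp y hy
        have hlamy : lam (w + a • u') = a := by
          rw [map_add, hlamV w hw, map_smul, hlamu', zero_add, smul_eq_mul, mul_one]
        have hpy : p (w + a • u') = w := by
          rw [hpapp, hlamy]
          abel
        rw [hpy]
        exact ⟨hw, key w hw a⟩
      refine ⟨p ∘ₗ π₁, ?_, ?_, ?_⟩
      · intro w hw
        simp only [LinearMap.comp_apply]
        rw [hπ₁id w (hVV' hw), hpapp, hlamV w hw, zero_smul, sub_zero]
      · intro x
        simp only [LinearMap.comp_apply]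
        exact (hpV' _ (hπ₁mem x)).1
      · intro x hx
        simp only [LinearMap.comp_apply]
        calc uE x ≤ uE (π₁ x) + ((ε / 2 : ℝ) : EReal) := hπ₁bd x hx
          _ ≤ (uE (p (π₁ x)) + ((ε / 2 : ℝ) : EReal)) + ((ε / 2 : ℝ) : EReal) :=
              add_le_add_left (hpV' _ (hπ₁mem x)).2 _
          _ = uE (p (π₁ x)) + (ε : EReal) := by
              rw [add_assoc, ← EReal.coe_add]
              norm_num

end FDL



section CORE

variable {K E F : Type*} [Field K]
    [AddCommGroup E] [Module K E] [AddCommGroup F] [Module K F]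
variable (v : K → EReal) (uE : E → EReal) (uF : F → EReal)
variable (hv0 : v 0 = ⊤) (hvbot : ∀ a, v a ≠ ⊥) (hvmul : ∀ a b, v (a * b) = v a + v b)
  (hker : ∀ a : K, v a = ⊤ → a = 0)
  (hcomplete : ∀ f : ℕ → K,
      (∀ r : ℝ, ∃ N, ∀ p ≥ N, ∀ q ≥ N, (r : EReal) ≤ v (f p - f q)) →
      ∃ a : K, ∀ r : ℝ, ∃ N, ∀ p ≥ N, (r : EReal) ≤ v (f p - a))
variable (uEbot : ∀ x, uE x ≠ ⊥) (uEsmul : ∀ (a : K) (x : E), uE (a • x) = v a + uE x)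
  (uEadd : ∀ x y, min (uE x) (uE y) ≤ uE (x + y))
  (uEred : ∀ x, uE x = ⊤ → x = 0)
variable (uFbot : ∀ y, uF y ≠ ⊥) (uFsmul : ∀ (a : K) (y : F), uF (a • y) = v a + uF y)
  (uFadd : ∀ x y, min (uF x) (uF y) ≤ uF (x + y))
  (uFred : ∀ y, uF y = ⊤ → y = 0)

include hv0 hvbot hvmul hker hcomplete uEbot uEsmul uEadd uEred uFbot uFsmul uFadd uFred in
lemma CORE (z : E ⊗[K] F) (hz : z ≠ 0) : ∃ B : ℝ, tensVal uE uF z ≤ (B : EReal) := by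
  classical
  set ι := Module.Basis.ofVectorSpaceIndex K F with hι
  set bF : Module.Basis ι K F := Module.Basis.ofVectorSpace K F with hbF
  set Ψ : E ⊗[K] F ≃ₗ[K] (ι →₀ E) :=
    (TensorProduct.congr (LinearEquiv.refl K E) bF.repr).trans
      (TensorProduct.finsuppScalarRight K K E ι) with hΨ
  have hΨtmul : ∀ (x : E) (y : F) (b : ι), Ψ (x ⊗ₜ[K] y) b = bF.repr y b • x := by
    intro x y b
    rw [hΨ]
    simp [TensorProduct.congr_tmul]
  set g : ι →₀ E := Ψ z with hg
  have hgne : g ≠ 0 := by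
    intro h
    exact hz (by rwa [hg, LinearEquiv.map_eq_zero_iff] at h)
  obtain ⟨b₀, hb₀⟩ : ∃ b, g b ≠ 0 := by
    by_contra h
    push_neg at h
    exact hgne (Finsupp.ext h)
  set V : Submodule K E := Submodule.span K ((g.support.image g : Finset E) : Set E) with hV
  haveI : FiniteDimensional K V := FiniteDimensional.span_of_finite K (Finset.finite_toSet _)
  have hgV : ∀ b, g b ∈ V := by
    intro b
    by_cases hb : b ∈ g.support
    · exact Submodule.subset_span (Finset.mem_coe.2 (Finset.mem_image_of_mem g hb))
    · rw [Finsupp.notMem_support_iff.1 hb]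
      exact V.zero_mem
  set v₀ : V := ⟨g b₀, hgV b₀⟩ with hv₀def
  have hv₀ : v₀ ≠ 0 := fun h => hb₀ (congrArg Subtype.val h)
  have hliv : LinearIndepOn K id ({v₀} : Set V) := LinearIndepOn.singleton hv₀
  set bb : Module.Basis _ K V := Module.Basis.extend hliv with hbb
  haveI : Fintype (↥(hliv.extend (Set.subset_univ _))) := FiniteDimensional.fintypeBasisIndex bb
  set i₀ : ↥(hliv.extend (Set.subset_univ _)) := ⟨v₀, hliv.subset_extend _ rfl⟩ with hi₀
  have hxli : LinearIndependent K fun j : ↥(hliv.extend (Set.subset_univ _)) =>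
      ((bb j : V) : E) :=
    bb.linearIndependent.map' V.subtype (Submodule.ker_subtype V)
  have hxli' : LinearIndependent K
      fun j : (Finset.univ : Finset (↥(hliv.extend (Set.subset_univ _)))) =>
        ((bb ↑j : V) : E) := by
    have hi : Function.Injective
        (fun j : (Finset.univ : Finset (↥(hliv.extend (Set.subset_univ _)))) =>
          (j : ↥(hliv.extend (Set.subset_univ _)))) := fun a b h => Subtype.ext h
    exact hxli.comp _ hi
  obtain ⟨C₀, hC₀⟩ := FDL v uE hv0 hvbot hvmul hker hcomplete uEbot uEsmul uEadd uEred
    Finset.univ.card Finset.univ rfl (fun j => ((bb j : V) : E)) hxli' i₀ (Finset.mem_univ _)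
  have hBND : ∀ w : V, uE (w : E) ≤ v (bb.repr w i₀) + (C₀ : EReal) := by
    intro w
    have hrep : (w : E) = ∑ j, bb.repr w j • ((bb j : V) : E) := by
      conv_lhs => rw [← bb.sum_repr w]
      push_cast
      rfl
    rw [hrep]
    exact hC₀ (fun j => bb.repr w j)
  set φv : V →ₗ[K] K := bb.coord i₀ with hφv
  have hφv₀ : φv v₀ = 1 := by
    have hb : bb i₀ = v₀ := Module.Basis.extend_apply_self hliv i₀
    have hc : φv (bb i₀) = 1 := by
      rw [hφv, Module.Basis.coord_apply, Module.Basis.repr_self, Finsupp.single_eq_same]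
    rw [hb] at hc
    exact hc
  set ystar : F := ∑ b ∈ g.support, (φv ⟨g b, hgV b⟩) • (bF b : F) with hystar
  have hyrep : ∀ b : ι, bF.repr ystar b = φv ⟨g b, hgV b⟩ := by
    intro b
    rw [hystar, map_sum]
    rw [Finsupp.finset_sum_apply]
    have heach : ∀ b' ∈ g.support,
        (bF.repr ((φv ⟨g b', hgV b'⟩) • (bF b' : F))) b
          = (φv ⟨g b', hgV b'⟩) * (if b' = b then 1 else 0) := by
      intro b' _
      rw [map_smul, Module.Basis.repr_self]
      simp [Finsupp.single_apply]
    rw [Finset.sum_congr rfl heach]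
    by_cases hb : b ∈ g.support
    · rw [Finset.sum_eq_single b]
      · simp
      · intro b' _ hne; simp [hne]
      · intro h; exact absurd hb h
    · have : ∀ b' ∈ g.support, (φv ⟨g b', hgV b'⟩) * (if b' = b then 1 else 0) = 0 := by
        intro b' hb'
        rcases eq_or_ne b' b with rfl | hne
        · exact absurd hb' hb
        · simp [hne]
      rw [Finset.sum_congr rfl this, Finset.sum_const_zero]
      have hgb : g b = 0 := Finsupp.notMem_support_iff.1 hb
      have : (⟨g b, hgV b⟩ : V) = 0 := Subtype.ext hgb
      rw [this, map_zero]
  have hy0 : ystar ≠ 0 := by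
    intro h
    have h1 := hyrep b₀
    rw [h, map_zero, Finsupp.zero_apply] at h1
    rw [hv₀def] at hφv₀
    rw [← h1] at hφv₀
    exact zero_ne_one hφv₀
  obtain ⟨By, hBy⟩ := ereal_isreal (uFbot ystar) (fun h => hy0 (uFred _ h))
  refine ⟨By + (C₀ + 1), ?_⟩
  rw [tensVal]
  apply sSup_le
  rintro r ⟨P, hPsum, rfl⟩
  -- the finite dimensional subspace containing firsts
  set U : Submodule K E := Submodule.span K ((P.map Prod.fst).toFinset : Set E) ⊔ V with hU
  haveI : FiniteDimensional K U := by
    have h1 : FiniteDimensional K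
        (Submodule.span K (((P.map Prod.fst).toFinset : Finset E) : Set E)) :=
      FiniteDimensional.span_of_finite K (Finset.finite_toSet _)
    exact Submodule.finiteDimensional_sup _ _
  have hVU : V ≤ U := le_sup_right
  have hPU : ∀ p ∈ P, p.1 ∈ U := by
    intro p hp
    refine Submodule.mem_sup_left (Submodule.subset_span ?_)
    rw [Finset.mem_coe, List.mem_toFinset, List.mem_map]
    exact ⟨p, hp, rfl⟩
  obtain ⟨π, hπid, hπmem, hπbd⟩ := PROJ v uE hv0 hvbot hvmul hker hcomplete uEbot uEsmul
    uEadd uEred (Module.finrank K U) U V inferInstance hVU (Nat.le_add_left _ _) 1 one_pos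
  set ψ : E →ₗ[K] K := φv ∘ₗ (LinearMap.codRestrict V π hπmem) with hψ
  have hψbd : ∀ x ∈ U, uE x ≤ v (ψ x) + ((C₀ + 1 : ℝ) : EReal) := by
    intro x hx
    have h1 := hπbd x hx
    have h2 := hBND ⟨π x, hπmem x⟩
    calc uE x ≤ uE (π x) + ((1 : ℝ) : EReal) := h1
      _ ≤ (v (ψ x) + (C₀ : EReal)) + ((1 : ℝ) : EReal) := add_le_add_left h2 _
      _ = v (ψ x) + ((C₀ + 1 : ℝ) : EReal) := by
          rw [add_assoc, ← EReal.coe_add]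
  set L : E ⊗[K] F →ₗ[K] F := TensorProduct.lift ((LinearMap.lsmul K F) ∘ₗ ψ) with hL
  have hLt : ∀ (x : E) (y : F), L (x ⊗ₜ[K] y) = ψ x • y := by
    intro x y
    rw [hL]
    simp [TensorProduct.lift.tmul]
  have factB : ∀ (w : E ⊗[K] F) (b : ι), bF.repr (L w) b = ψ (Ψ w b) := by
    intro w b
    induction w using TensorProduct.induction_on with
    | zero => simp
    | tmul x y =>
      rw [hLt, hΨtmul, map_smul, map_smul]
      simp [smul_eq_mul, mul_comm]
    | add w₁ w₂ h₁ h₂ =>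
      rw [map_add, map_add, map_add, Finsupp.add_apply, Finsupp.add_apply, map_add, h₁, h₂]
  have hLz : L z = ystar := by
    apply bF.repr.injective
    ext b
    rw [factB z b, hyrep b]
    have hπg : π (g b) = g b := hπid (g b) (hgV b)
    rw [hψ]
    simp only [LinearMap.comp_apply, LinearMap.codRestrict_apply]
    congr 1
    exact Subtype.ext hπg
  have hpt : ∀ p ∈ P, uE p.1 + uF p.2 ≤ uF (ψ p.1 • p.2) + ((C₀ + 1 : ℝ) : EReal) := by
    intro p hp
    rw [uFsmul]
    calc uE p.1 + uF p.2 ≤ (v (ψ p.1) + ((C₀ + 1 : ℝ) : EReal)) + uF p.2 :=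
          add_le_add_left (hψbd p.1 (hPU p hp)) _
      _ = (v (ψ p.1) + uF p.2) + ((C₀ + 1 : ℝ) : EReal) := by
          rw [add_right_comm]
  have hfold := foldle P (fun p => uE p.1 + uF p.2) (fun p => uF (ψ p.1 • p.2)) (C₀ + 1) hpt
  have hsum : (P.map fun p => ψ p.1 • p.2).sum = L z := by
    rw [← hPsum, map_list_sum]
    rw [List.map_map]
    refine congrArg List.sum (List.map_congr_left ?_)
    intro p _
    exact (hLt p.1 p.2).symm
  have hsumle : ((P.map fun p => ψ p.1 • p.2).map uF).foldr min ⊤ ≤ uF ystar := by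
    rw [← hLz, ← hsum]
    exact listmin v uF hv0 uFbot uFsmul uFadd _
  rw [List.map_map] at hsumle
  calc (P.map fun p => uE p.1 + uF p.2).foldr min ⊤
      ≤ (P.map fun p => uF (ψ p.1 • p.2)).foldr min ⊤ + ((C₀ + 1 : ℝ) : EReal) := hfold
    _ ≤ uF ystar + ((C₀ + 1 : ℝ) : EReal) := add_le_add_left hsumle _
    _ = ((By + (C₀ + 1) : ℝ) : EReal) := by rw [hBy, ← EReal.coe_add]

end CORE

section TOPCHAR

variable {K E F : Type*} [Field K]
    [AddCommGroup E] [Module K E] [AddCommGroup F] [Module K F]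

lemma topchar (uE : E → EReal) (uF : F → EReal) (z : E ⊗[K] F) :
    tensVal uE uF z = ⊤ ↔ ∀ r : ℝ, ∃ P : List (E × F),
      (P.map fun p => p.1 ⊗ₜ[K] p.2).sum = z ∧
      (r : EReal) ≤ (P.map fun p => uE p.1 + uF p.2).foldr min ⊤ := by
  rw [tensVal, sSup_eq_top]
  constructor
  · intro h r
    obtain ⟨a, ⟨P, hP, rfl⟩, hra⟩ := h (r : EReal) (EReal.coe_lt_top r)
    exact ⟨P, hP, hra.le⟩
  · intro h b hb
    obtain ⟨r, hbr, -⟩ := EReal.exists_between_coe_real hb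
    obtain ⟨P, hP, hrP⟩ := h r
    exact ⟨_, ⟨P, hP, rfl⟩, lt_of_lt_of_le hbr hrP⟩

end TOPCHAR

end TVK

/-- over a complete algebraically closed field with dense value group,
the kernel of the tensor product valuation of two reduced valuations is zero; more
generally, `ker (u_E ⊗ u_F)` is the submodule generated by the simple tensors with one
factor in `ker u_E` or in `ker u_F` (the image of `ker u_E ⊗ F + E ⊗ ker u_F`). -/
theorem tensVal_kernel {K E F : Type*} [Field K] [IsAlgClosed K]
    [AddCommGroup E] [Module K E] [AddCommGroup F] [Module K F]
    (v : K → EReal) (hv0 : v 0 = ⊤) (hvbot : ∀ a, v a ≠ ⊥)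
    (hvmul : ∀ a b, v (a * b) = v a + v b)
    (hvadd : ∀ a b, min (v a) (v b) ≤ v (a + b))
    (hker : ∀ a : K, v a = ⊤ → a = 0)
    (hdense : ∀ α β : ℝ, α < β → ∃ a : K, (α : EReal) < v a ∧ v a < (β : EReal))
    (hcomplete : ∀ f : ℕ → K,
      (∀ r : ℝ, ∃ N, ∀ p ≥ N, ∀ q ≥ N, (r : EReal) ≤ v (f p - f q)) →
      ∃ a : K, ∀ r : ℝ, ∃ N, ∀ p ≥ N, (r : EReal) ≤ v (f p - a))
    (uE : E → EReal) (uEbot : ∀ x, uE x ≠ ⊥)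
    (uEsmul : ∀ (a : K) (x : E), uE (a • x) = v a + uE x)
    (uEadd : ∀ x y, min (uE x) (uE y) ≤ uE (x + y))
    (uF : F → EReal) (uFbot : ∀ y, uF y ≠ ⊥)
    (uFsmul : ∀ (a : K) (y : F), uF (a • y) = v a + uF y)
    (uFadd : ∀ x y, min (uF x) (uF y) ≤ uF (x + y)) :
    ((∀ x : E, uE x = ⊤ → x = 0) → (∀ y : F, uF y = ⊤ → y = 0) →
        ∀ z : E ⊗[K] F, tensVal uE uF z = ⊤ → z = 0) ∧
    {z : E ⊗[K] F | tensVal uE uF z = ⊤} =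
      (Submodule.span K
        ({ z : E ⊗[K] F | ∃ x y, uE x = ⊤ ∧ z = x ⊗ₜ[K] y } ∪
         { z : E ⊗[K] F | ∃ x y, uF y = ⊤ ∧ z = x ⊗ₜ[K] y }) : Set (E ⊗[K] F)) := by
  classical
  have part1 : (∀ x : E, uE x = ⊤ → x = 0) → (∀ y : F, uF y = ⊤ → y = 0) →
      ∀ z : E ⊗[K] F, tensVal uE uF z = ⊤ → z = 0 := by
    intro hredE hredF z htop
    by_contra hz
    obtain ⟨B, hB⟩ := TVK.CORE v uE uF hv0 hvbot hvmul hker hcomplete uEbot uEsmul uEadd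
      hredE uFbot uFsmul uFadd hredF z hz
    rw [htop] at hB
    exact (EReal.coe_lt_top B).not_ge hB
  refine ⟨part1, ?_⟩
  set Gen : Set (E ⊗[K] F) :=
    ({ z : E ⊗[K] F | ∃ x y, uE x = ⊤ ∧ z = x ⊗ₜ[K] y } ∪
     { z : E ⊗[K] F | ∃ x y, uF y = ⊤ ∧ z = x ⊗ₜ[K] y }) with hGen
  set S : Submodule K (E ⊗[K] F) := Submodule.span K Gen with hS
  have hzero : tensVal uE uF (0 : E ⊗[K] F) = ⊤ :=
    (TVK.topchar uE uF 0).2 (fun r => ⟨[], by simp, by simp⟩)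
  apply Set.eq_of_subset_of_subset
  · -- kernel ⊆ span
    intro z hz
    simp only [Set.mem_setOf_eq] at hz
    -- set up complements
    set NE : Submodule K E :=
      { carrier := {x | uE x = ⊤}
        add_mem' := by
          intro a b ha hb
          simp only [Set.mem_setOf_eq] at ha hb ⊢
          have h := uEadd a b
          rw [ha, hb, min_self] at h
          exact top_le_iff.1 h
        zero_mem' := TVK.u_zero v uE hv0 uEbot uEsmul
        smul_mem' := by
          intro c x hx
          simp only [Set.mem_setOf_eq] at hx ⊢
          rw [uEsmul, hx]
          exact EReal.add_top_of_ne_bot (hvbot c) } with hNE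
    set NF : Submodule K F :=
      { carrier := {y | uF y = ⊤}
        add_mem' := by
          intro a b ha hb
          simp only [Set.mem_setOf_eq] at ha hb ⊢
          have h := uFadd a b
          rw [ha, hb, min_self] at h
          exact top_le_iff.1 h
        zero_mem' := TVK.u_zero v uF hv0 uFbot uFsmul
        smul_mem' := by
          intro c y hy
          simp only [Set.mem_setOf_eq] at hy ⊢
          rw [uFsmul, hy]
          exact EReal.add_top_of_ne_bot (hvbot c) } with hNF
    obtain ⟨E', hE'⟩ := Submodule.exists_isCompl NE
    obtain ⟨F', hF'⟩ := Submodule.exists_isCompl NF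
    set pE' : E →ₗ[K] E' := E'.projectionOnto NE hE'.symm with hpE'
    set pF' : F →ₗ[K] F' := F'.projectionOnto NF hF'.symm with hpF'
    have hnE : ∀ x : E, x - ↑(pE' x) ∈ NE := by
      intro x
      have h := Submodule.projection_add_projection_eq_self hE' x
      have : x - ↑(pE' x) = ↑(NE.projectionOnto E' hE' x) :=
        sub_eq_iff_eq_add.2 h.symm
      rw [this]
      exact Submodule.coe_mem _
    have hnF : ∀ y : F, y - ↑(pF' y) ∈ NF := by
      intro y
      have h := Submodule.projection_add_projection_eq_self hF' y
      have : y - ↑(pF' y) = ↑(NF.projectionOnto F' hF' y) :=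
        sub_eq_iff_eq_add.2 h.symm
      rw [this]
      exact Submodule.coe_mem _
    have hval_pE : ∀ x : E, uE ↑(pE' x) = uE x := by
      intro x
      have h1 : (↑(pE' x) : E) = x - (x - ↑(pE' x)) := by abel
      rw [h1]
      exact TVK.u_kerinv v uE hvbot hvmul hker uEbot uEsmul uEadd x _ (hnE x)
    have hval_pF : ∀ y : F, uF ↑(pF' y) = uF y := by
      intro y
      have h1 : (↑(pF' y) : F) = y - (y - ↑(pF' y)) := by abel
      rw [h1]
      exact TVK.u_kerinv v uF hvbot hvmul hker uFbot uFsmul uFadd y _ (hnF y)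
    -- restricted valuations
    set uE' : E' → EReal := fun x => uE ↑x with huE'
    set uF' : F' → EReal := fun y => uF ↑y with huF'
    set q' : E ⊗[K] F →ₗ[K] E' ⊗[K] F' := TensorProduct.map pE' pF' with hq'
    have htop' : tensVal uE' uF' (q' z) = ⊤ := by
      rw [TVK.topchar]
      intro r
      obtain ⟨P, hPsum, hPfold⟩ := (TVK.topchar uE uF z).1 hz r
      refine ⟨P.map fun p => (pE' p.1, pF' p.2), ?_, ?_⟩
      · rw [List.map_map, ← hPsum, map_list_sum, List.map_map]
        refine congrArg List.sum (List.map_congr_left ?_)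
        intro p _
        simp [hq', TensorProduct.map_tmul]
      · rw [List.map_map]
        have : ((fun p : E' × F' => uE' p.1 + uF' p.2) ∘ fun p : E × F => (pE' p.1, pF' p.2))
            = fun p : E × F => uE p.1 + uF p.2 := by
          funext p
          simp only [Function.comp_apply]
          rw [huE', huF']
          simp only []
          rw [hval_pE, hval_pF]
        rw [this]
        exact hPfold
    have hz0 : q' z = 0 := by
      by_contra h
      obtain ⟨B, hB⟩ := TVK.CORE (E := E') (F := F') v uE' uF' hv0 hvbot hvmul hker hcomplete
        (fun x => uEbot ↑x)
        (fun a x => by rw [huE']; simp only []; rw [Submodule.coe_smul, uEsmul])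
        (fun x y => by rw [huE']; simp only []; rw [Submodule.coe_add]; exact uEadd _ _)
        (fun x hx => by
          have hmem : (x : E) ∈ NE := hx
          have := Submodule.disjoint_def.1 hE'.disjoint (x : E) hmem x.2
          exact Subtype.ext this)
        (fun y => uFbot ↑y)
        (fun a y => by rw [huF']; simp only []; rw [Submodule.coe_smul, uFsmul])
        (fun x y => by rw [huF']; simp only []; rw [Submodule.coe_add]; exact uFadd _ _)
        (fun y hy => by
          have hmem : (y : F) ∈ NF := hy
          have := Submodule.disjoint_def.1 hF'.disjoint (y : F) hmem y.2
          exact Subtype.ext this)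
        (q' z) h
      rw [htop'] at hB
      exact (EReal.coe_lt_top B).not_ge hB
    set jmap : E ⊗[K] F →ₗ[K] E ⊗[K] F :=
      TensorProduct.map (E'.subtype ∘ₗ pE') (F'.subtype ∘ₗ pF') with hjmap
    have hjz : jmap z = 0 := by
      have hcomp : jmap = (TensorProduct.map E'.subtype F'.subtype) ∘ₗ q' := by
        rw [hjmap, hq', TensorProduct.map_comp]
      rw [hcomp, LinearMap.comp_apply, hz0, map_zero]
    have hsub : ∀ w : E ⊗[K] F, w - jmap w ∈ S := by
      intro w
      induction w using TensorProduct.induction_on with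
      | zero => rw [map_zero, sub_zero]; exact S.zero_mem
      | tmul x y =>
        have hrw : x ⊗ₜ[K] y - jmap (x ⊗ₜ[K] y)
            = (x - ↑(pE' x)) ⊗ₜ[K] y + (↑(pE' x) : E) ⊗ₜ[K] (y - ↑(pF' y)) := by
          rw [hjmap, TensorProduct.map_tmul]
          simp only [LinearMap.comp_apply, Submodule.coe_subtype]
          rw [TensorProduct.sub_tmul, TensorProduct.tmul_sub]
          abel
        rw [hrw]
        refine S.add_mem (Submodule.subset_span ?_) (Submodule.subset_span ?_)
        · exact Or.inl ⟨x - ↑(pE' x), y, show uE (x - ↑(pE' x)) = ⊤ from hnE x, rfl⟩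
        · exact Or.inr ⟨↑(pE' x), y - ↑(pF' y), show uF (y - ↑(pF' y)) = ⊤ from hnF y, rfl⟩
      | add w₁ w₂ h₁ h₂ =>
        rw [map_add, add_sub_add_comm]
        exact S.add_mem h₁ h₂
    have := hsub z
    rw [hjz, sub_zero] at this
    exact this
  · -- span ⊆ kernel
    intro z hz
    simp only [SetLike.mem_coe] at hz
    simp only [Set.mem_setOf_eq]
    induction hz using Submodule.span_induction with
    | mem w hw =>
      rcases hw with ⟨x, y, hx, rfl⟩ | ⟨x, y, hy, rfl⟩
      · refine (TVK.topchar uE uF _).2 (fun r => ⟨[(x, y)], by simp, ?_⟩)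
        simp only [List.map_cons, List.map_nil, List.foldr_cons, List.foldr_nil]
        rw [hx, EReal.top_add_of_ne_bot (uFbot y)]
        simp
      · refine (TVK.topchar uE uF _).2 (fun r => ⟨[(x, y)], by simp, ?_⟩)
        simp only [List.map_cons, List.map_nil, List.foldr_cons, List.foldr_nil]
        rw [hy, EReal.add_top_of_ne_bot (uEbot x)]
        simp
    | zero => exact hzero
    | add w₁ w₂ hw₁ hw₂ ht₁ ht₂ =>
      rw [TVK.topchar] at ht₁ ht₂ ⊢
      intro r
      obtain ⟨P₁, hs₁, hf₁⟩ := ht₁ r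
      obtain ⟨P₂, hs₂, hf₂⟩ := ht₂ r
      refine ⟨P₁ ++ P₂, ?_, ?_⟩
      · rw [List.map_append, List.sum_append, hs₁, hs₂]
      · rw [List.map_append, List.foldr_append, TVK.foldbase]
        exact le_min hf₁ hf₂
    | smul a w hw ht =>
      by_cases ha : a = 0
      · rw [ha, zero_smul]
        exact hzero
      · obtain ⟨ra, hra⟩ := TVK.ereal_isreal (hvbot a) (fun h => ha (hker a h))
        rw [TVK.topchar] at ht ⊢
        intro r
        obtain ⟨P, hsP, hfP⟩ := ht (r - ra)
        refine ⟨P.map fun p => (a • p.1, p.2), ?_, ?_⟩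
        · rw [List.map_map]
          have : ((fun p : E × F => p.1 ⊗ₜ[K] p.2) ∘ fun p : E × F => (a • p.1, p.2))
              = (fun w : E ⊗[K] F => a • w) ∘ (fun p : E × F => p.1 ⊗ₜ[K] p.2) := by
            funext p
            simp only [Function.comp_apply]
            rw [TensorProduct.smul_tmul']
          rw [this, ← List.map_map, ← List.smul_sum, hsP]
        · rw [List.map_map]
          have : ((fun p : E × F => uE p.1 + uF p.2) ∘ fun p : E × F => (a • p.1, p.2))
              = fun p : E × F => (ra : EReal) + (uE p.1 + uF p.2) := by
            funext p
            simp only [Function.comp_apply]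
            rw [uEsmul, hra, add_assoc]
          rw [this]
          have hfold := TVK.foldadd ra (P.map fun p : E × F => uE p.1 + uF p.2)
          rw [List.map_map] at hfold
          rw [show ((fun x => (ra : EReal) + x) ∘ fun p : E × F => uE p.1 + uF p.2)
            = fun p : E × F => (ra : EReal) + (uE p.1 + uF p.2) from rfl] at hfold
          rw [hfold]
          calc (r : EReal) = ((ra : EReal)) + ((r - ra : ℝ) : EReal) := by
                rw [← EReal.coe_add]; norm_num
            _ ≤ (ra : EReal) + (P.map fun p : E × F => uE p.1 + uF p.2).foldr min ⊤ :=
                add_le_add_right hfP _
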